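/- Suppose g_1, g_2, ... are independent real random variables, identically distributed (stationary second moments: E[g_i²] = E[g_j²] for all i,j), with |g_i²| ≤ G almost surely for some G > 0. Let 0 < β < 1, and define the bias-corrected exponential moving average of squares v̂_s = (1-β)/(1-β^s) · Σ_{i=1}^s β^{s-i} g_i². Fix t_0 > log_β(1 - 1/√2) and t > t_0, and assume t - t_0 ≥ 1/(1-β²). Then for any δ ∈ (0,1), with probability at least 1 - δ, |v̂_t - v̂_{t_0}| < √( 8 G² (1-β)² (t - t_0) log(2/δ) ). -/

import Mathlib

open MeasureTheory ProbabilityTheory Finset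

lemma aux_mgf_le {Ω : Type*} [MeasurableSpace Ω] {μ : Measure Ω} [IsProbabilityMeasure μ]
    {X : Ω → ℝ} (hX : Measurable X) {a : ℝ} (ha : 0 ≤ a)
    (hmean : ∫ ω, X ω ∂μ = 0) (hb : ∀ᵐ ω ∂μ, |X ω| ≤ a) (s : ℝ) :
    mgf X μ s ≤ Real.exp (s ^ 2 * a ^ 2 / 2) := by
  rcases eq_or_lt_of_le ha with h0 | ha
  · have hX0 : ∀ᵐ ω ∂μ, X ω = 0 :=
      hb.mono fun ω h => abs_eq_zero.mp (le_antisymm (h0 ▸ h) (abs_nonneg _))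
    have h1 : mgf X μ s = ∫ ω, (1:ℝ) ∂μ := by
      unfold mgf
      exact integral_congr_ae (hX0.mono fun ω h => by simp [h])
    rw [h1]
    simp only [integral_const, probReal_univ, smul_eq_mul, one_mul]
    exact Real.one_le_exp (by positivity)
  · have hint : Integrable X μ :=
      (integrable_const a).mono' hX.aestronglyMeasurable
        (hb.mono fun ω h => by rwa [Real.norm_eq_abs])
    have hexp : Integrable (fun ω => Real.exp (s * X ω)) μ := by
      refine (integrable_const (Real.exp (|s| * a))).mono'
        (((hX.const_mul s).exp).aestronglyMeasurable) ?_
      filter_upwards [hb] with ω h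
      rw [Real.norm_eq_abs, abs_of_pos (Real.exp_pos _)]
      refine Real.exp_le_exp.mpr ((le_abs_self _).trans ?_)
      rw [abs_mul]
      exact mul_le_mul_of_nonneg_left h (abs_nonneg s)
    have hpt : ∀ᵐ ω ∂μ, Real.exp (s * X ω) ≤
        Real.cosh (s*a) + X ω * (Real.sinh (s*a) / a) := by
      filter_upwards [hb] with ω h
      set x := X ω with hxdef
      have hx1 : -a ≤ x := neg_le_of_abs_le h
      have hx2 : x ≤ a := le_of_abs_le h
      have hθ1 : 0 ≤ (a - x)/(2*a) := div_nonneg (by linarith) (by linarith)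
      have hθ2 : 0 ≤ (a + x)/(2*a) := div_nonneg (by linarith) (by linarith)
      have hθs : (a - x)/(2*a) + (a + x)/(2*a) = 1 := by field_simp; ring
      have hc := convexOn_exp.2 (Set.mem_univ (s * (-a))) (Set.mem_univ (s * a)) hθ1 hθ2 hθs
      simp only [smul_eq_mul] at hc
      have harg : (a - x)/(2*a) * (s * (-a)) + (a + x)/(2*a) * (s * a) = s * x := by
        field_simp; ring
      rw [harg, mul_neg] at hc
      refine hc.trans_eq ?_
      rw [Real.cosh_eq, Real.sinh_eq]
      field_simp
      ring
    have h1 : mgf X μ s ≤ Real.cosh (s*a) := by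
      have hR : Integrable (fun ω => Real.cosh (s*a) + X ω * (Real.sinh (s*a)/a)) μ :=
        (integrable_const _).add (hint.mul_const _)
      calc mgf X μ s = ∫ ω, Real.exp (s * X ω) ∂μ := rfl
      _ ≤ ∫ ω, (Real.cosh (s*a) + X ω * (Real.sinh (s*a)/a)) ∂μ :=
          integral_mono_ae hexp hR hpt
      _ = Real.cosh (s*a) := by
          rw [integral_add (integrable_const _) (hint.mul_const _), integral_const,
            integral_mul_const, hmean]
          simp
    calc mgf X μ s ≤ Real.cosh (s*a) := h1
    _ ≤ Real.exp ((s*a)^2/2) := Real.cosh_le_exp_half_sq _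
    _ = Real.exp (s^2*a^2/2) := by rw [mul_pow]

lemma aux_chernoff {Ω : Type*} [MeasurableSpace Ω] {μ : Measure Ω} [IsProbabilityMeasure μ]
    (X : ℕ → Ω → ℝ) (hXm : ∀ i, Measurable (X i))
    (hindep : iIndepFun X μ)
    (a : ℕ → ℝ) (ha : ∀ i, 0 ≤ a i)
    (hmean : ∀ i, ∫ ω, X i ω ∂μ = 0)
    (hb : ∀ i, ∀ᵐ ω ∂μ, |X i ω| ≤ a i)
    (s : Finset ℕ) {ε V : ℝ} (hε : 0 < ε) (hV : 0 < V)
    (hVa : ∑ i ∈ s, (a i)^2 ≤ V) :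
    (μ {ω | ε ≤ (∑ i ∈ s, X i) ω}).toReal ≤ Real.exp (-(ε^2) / (2*V)) := by
  set u := ε / V with hu
  have hu0 : 0 < u := div_pos hε hV
  have hint : ∀ i ∈ s, Integrable (fun ω => Real.exp (u * X i ω)) μ := by
    intro i _
    refine (integrable_const (Real.exp (|u| * a i))).mono'
      (((hXm i).const_mul u).exp).aestronglyMeasurable ?_
    filter_upwards [hb i] with ω h
    rw [Real.norm_eq_abs, abs_of_pos (Real.exp_pos _)]
    refine Real.exp_le_exp.mpr ((le_abs_self _).trans ?_)
    rw [abs_mul]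
    exact mul_le_mul_of_nonneg_left h (abs_nonneg u)
  have hsum_int : Integrable (fun ω => Real.exp (u * (∑ i ∈ s, X i) ω)) μ :=
    hindep.integrable_exp_mul_sum hXm hint
  have h1 := measure_ge_le_exp_mul_mgf (μ := μ) (X := ∑ i ∈ s, X i) (t := u) ε hu0.le hsum_int
  have h2 : mgf (∑ i ∈ s, X i) μ u ≤ Real.exp (u^2 * V / 2) := by
    rw [hindep.mgf_sum hXm]
    calc ∏ i ∈ s, mgf (X i) μ u ≤ ∏ i ∈ s, Real.exp (u^2 * (a i)^2 / 2) :=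
          Finset.prod_le_prod (fun i _ => mgf_nonneg)
            (fun i _ => aux_mgf_le (hXm i) (ha i) (hmean i) (hb i) u)
    _ = Real.exp (∑ i ∈ s, u^2*(a i)^2/2) := (Real.exp_sum _ _).symm
    _ ≤ Real.exp (u^2 * V / 2) := by
        refine Real.exp_le_exp.mpr ?_
        rw [← Finset.sum_div, ← Finset.mul_sum]
        have := sq_nonneg u
        gcongr
  calc (μ {ω | ε ≤ (∑ i ∈ s, X i) ω}).toReal
      ≤ Real.exp (-u*ε) * mgf (∑ i ∈ s, X i) μ u := h1
  _ ≤ Real.exp (-u*ε) * Real.exp (u^2*V/2) := by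
      exact mul_le_mul_of_nonneg_left h2 (Real.exp_pos _).le
  _ = Real.exp (-u*ε + u^2*V/2) := (Real.exp_add _ _).symm
  _ = Real.exp (-(ε^2)/(2*V)) := by
      rw [hu]; congr 1; field_simp; ring

lemma aux_sum_Icc_pow (x : ℝ) (n : ℕ) :
    ∑ i ∈ Icc 1 n, x ^ (n - i) = ∑ j ∈ range n, x ^ j := by
  rw [← Finset.Ico_add_one_right_eq_Icc, Finset.sum_Ico_eq_sum_range]
  simp only [Nat.add_sub_cancel]
  calc ∑ i ∈ range n, x^(n - (1+i)) = ∑ i ∈ range n, x^(n-1-i) :=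
        Finset.sum_congr rfl fun i _ => by congr 1; omega
  _ = ∑ j ∈ range n, x^j := Finset.sum_range_reflect _ _

lemma aux_geo_le {x : ℝ} (h0 : 0 ≤ x) (h1 : x < 1) (n : ℕ) :
    ∑ j ∈ range n, x ^ j ≤ 1 / (1 - x) := by
  have hx : (0:ℝ) < 1 - x := by linarith
  have heq : ∑ j ∈ range n, x ^ j = (1 - x ^ n) / (1 - x) := by
    rw [geom_sum_eq h1.ne n]
    rw [div_eq_div_iff (by linarith) (by linarith)]
    ring
  rw [heq]
  have hp : (0:ℝ) ≤ x ^ n := pow_nonneg h0 n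
  gcongr
  linarith

set_option maxHeartbeats 1000000 in
/-- Scalar version of Theorem 1 of the STEP paper: concentration of the difference
of bias-corrected exponential moving averages of the squared gradients. -/
theorem step_theorem_scalar
    {Ω : Type*} [MeasureSpace Ω] [IsProbabilityMeasure (volume : Measure Ω)]
    (β : ℝ) (hβ : 0 < β) (hβ1 : β < 1)
    (g : ℕ → Ω → ℝ) (G : ℝ) (hG : 0 < G)
    (hmeas : ∀ i, Measurable (g i))
    (hindep : iIndepFun (fun i ω => (g i ω) ^ 2) volume)
    (hstat : ∀ i j, (∫ ω : Ω, (g i ω) ^ 2 ∂(volume : Measure Ω)) =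
                    (∫ ω : Ω, (g j ω) ^ 2 ∂(volume : Measure Ω)))
    (hbdd : ∀ i, ∀ᵐ ω : Ω, |(g i ω) ^ 2| ≤ G)
    (t₀ t : ℕ) (ht₀ : (t₀ : ℝ) > Real.logb β (1 - 1 / Real.sqrt 2)) (ht : t₀ < t)
    (hwin : (t : ℝ) - t₀ ≥ 1 / (1 - β ^ 2))
    (δ : ℝ) (hδ : δ ∈ Set.Ioo (0 : ℝ) 1)
    (vhat : ℕ → Ω → ℝ)
    (hvhat : ∀ s : ℕ, ∀ ω : Ω,
      vhat s ω = (1 - β) / (1 - β ^ s) * ∑ i ∈ Icc 1 s, β ^ (s - i) * (g i ω) ^ 2) :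
    (volume : Measure Ω)
      {ω | |vhat t ω - vhat t₀ ω| <
        Real.sqrt (8 * G ^ 2 * (1 - β) ^ 2 * ((t : ℝ) - t₀) * Real.log (2 / δ))} ≥
      ENNReal.ofReal (1 - δ) := by
  obtain ⟨hδ0, hδ1⟩ := hδ
  have hβ' : (0:ℝ) < 1 - β := by linarith
  -- √2 facts
  have hs2 : (1:ℝ) < Real.sqrt 2 := by
    have : Real.sqrt 1 < Real.sqrt 2 := Real.sqrt_lt_sqrt (by norm_num) (by norm_num)
    simpa using this
  have hs2pos : (0:ℝ) < Real.sqrt 2 := by linarith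
  have hx0 : (0:ℝ) < 1 - 1/Real.sqrt 2 := by
    have : 1/Real.sqrt 2 < 1 := by rw [div_lt_one hs2pos]; exact hs2
    linarith
  have hx1 : (1:ℝ) - 1/Real.sqrt 2 < 1 := by
    have : (0:ℝ) < 1/Real.sqrt 2 := by positivity
    linarith
  -- t₀ ≥ 1
  have hlogb_pos : 0 < Real.logb β (1 - 1/Real.sqrt 2) := by
    rw [Real.logb, ← neg_div_neg_eq]
    exact div_pos (by simpa using (Real.log_neg hx0 hx1))
      (by simpa using (Real.log_neg hβ hβ1))
  have ht₀1 : 1 ≤ t₀ := by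
    rcases Nat.eq_zero_or_pos t₀ with h | h
    · exfalso; rw [h] at ht₀; simp only [Nat.cast_zero] at ht₀; linarith
    · exact h
  -- β^t₀ < 1 - 1/√2
  have hbt0 : β ^ t₀ < 1 - 1/Real.sqrt 2 := by
    have h1 : β ^ (t₀:ℝ) < β ^ (Real.logb β (1 - 1/Real.sqrt 2)) :=
      Real.rpow_lt_rpow_of_exponent_gt hβ hβ1 ht₀
    rwa [Real.rpow_logb hβ hβ1.ne hx0, Real.rpow_natCast] at h1
  have hd0 : 1/Real.sqrt 2 < 1 - β ^ t₀ := by linarith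
  have h1t0 : (0:ℝ) < 1 - β ^ t₀ := lt_trans (by positivity) hd0
  have hβtt : β ^ t ≤ β ^ t₀ := pow_le_pow_of_le_one hβ.le hβ1.le ht.le
  have h1t : (0:ℝ) < 1 - β ^ t := by
    have : β ^ t < 1 := pow_lt_one₀ hβ.le hβ1 (by omega)
    linarith
  set A : ℝ := (1 - β)/(1 - β ^ t) with hA_def
  set Bc : ℝ := (1 - β)/(1 - β ^ t₀) with hB_def
  set m : ℝ := ∫ ω, (g 1 ω) ^ 2 with hm_def
  set c : ℕ → ℝ := fun i => A * β ^ (t - i) - (if i ≤ t₀ then Bc * β ^ (t₀ - i) else 0)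
    with hc_def
  set X : ℕ → Ω → ℝ := fun i ω => c i * ((g i ω) ^ 2 - m) with hX_def
  have hA0 : 0 ≤ A := div_nonneg hβ'.le h1t.le
  have hB0 : 0 ≤ Bc := div_nonneg hβ'.le h1t0.le
  have hAleB : A ≤ Bc := by
    rw [hA_def, hB_def]
    exact div_le_div_of_nonneg_left hβ'.le h1t0 (by linarith)
  have hBle : Bc ≤ Real.sqrt 2 * (1 - β) := by
    rw [hB_def]
    calc (1 - β)/(1 - β ^ t₀) ≤ (1 - β)/(1/Real.sqrt 2) :=
          div_le_div_of_nonneg_left hβ'.le (by positivity) hd0.le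
    _ = Real.sqrt 2 * (1 - β) := by field_simp
  -- integrability of g_i^2 and bounds on m
  have hgm : ∀ i, Measurable (fun ω => (g i ω) ^ 2) := fun i => (hmeas i).pow_const 2
  have hgint : ∀ i, Integrable (fun ω => (g i ω) ^ 2) (volume : Measure Ω) := fun i =>
    (integrable_const G).mono' (hgm i).aestronglyMeasurable
      ((hbdd i).mono fun ω h => by rwa [Real.norm_eq_abs])
  have hm0 : 0 ≤ m := integral_nonneg fun ω => sq_nonneg _
  have hmG : m ≤ G := by
    have h := integral_mono_ae (hgint 1) (integrable_const G)
      ((hbdd 1).mono fun ω h => (le_abs_self _).trans h)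
    simpa using h
  -- properties of X
  have hXmeas : ∀ i, Measurable (X i) := fun i =>
    (((hmeas i).pow_const 2).sub measurable_const).const_mul (c i)
  have hXindep : iIndepFun X volume := by
    have := hindep.comp (fun i (x : ℝ) => c i * (x - m))
      (fun i => (measurable_id.sub measurable_const).const_mul (c i))
    exact this
  have hXmean : ∀ i, ∫ ω, X i ω = 0 := by
    intro i
    rw [hX_def]
    simp only
    rw [integral_const_mul, integral_sub (hgint i) (integrable_const m), integral_const]
    rw [hstat i 1, ← hm_def]
    simp
  have hXbdd : ∀ i, ∀ᵐ ω : Ω, |X i ω| ≤ |c i| * G := by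
    intro i
    filter_upwards [hbdd i] with ω h
    rw [hX_def]
    simp only [abs_mul]
    refine mul_le_mul_of_nonneg_left ?_ (abs_nonneg _)
    have h1 : 0 ≤ (g i ω) ^ 2 := sq_nonneg _
    have h2 : (g i ω) ^ 2 ≤ G := (le_abs_self _).trans h
    rw [abs_le]
    constructor <;> [linarith; linarith]
  -- sum of coefficients is zero
  have hfil : (Icc 1 t).filter (fun i => i ≤ t₀) = Icc 1 t₀ := by
    ext i
    simp only [Finset.mem_filter, Finset.mem_Icc]
    omega
  have hne1 : (1:ℝ) - β ^ t ≠ 0 := h1t.ne'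
  have hne0 : (1:ℝ) - β ^ t₀ ≠ 0 := h1t0.ne'
  have hneβ : β - 1 ≠ 0 := sub_ne_zero.mpr hβ1.ne
  have hAsum : ∑ i ∈ Icc 1 t, A * β ^ (t - i) = 1 := by
    rw [← Finset.mul_sum, aux_sum_Icc_pow, geom_sum_eq hβ1.ne, hA_def]
    field_simp
    ring
  have hBsum : ∑ i ∈ Icc 1 t₀, Bc * β ^ (t₀ - i) = 1 := by
    rw [← Finset.mul_sum, aux_sum_Icc_pow, geom_sum_eq hβ1.ne, hB_def]
    field_simp
    ring
  have hitesum : ∑ i ∈ Icc 1 t, (if i ≤ t₀ then Bc * β ^ (t₀ - i) else 0) = 1 := by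
    rw [← Finset.sum_filter, hfil, hBsum]
  have hcsum : ∑ i ∈ Icc 1 t, c i = 0 := by
    rw [hc_def]
    rw [Finset.sum_sub_distrib, hAsum, hitesum]
    ring
  -- the difference equals the sum of X i
  have hdiff : ∀ ω, vhat t ω - vhat t₀ ω = ∑ i ∈ Icc 1 t, X i ω := by
    intro ω
    have hv1 : vhat t ω = ∑ i ∈ Icc 1 t, (A * β ^ (t - i)) * (g i ω) ^ 2 := by
      rw [hvhat t ω, Finset.mul_sum, hA_def]
      exact Finset.sum_congr rfl fun i _ => by ring
    have hv2 : vhat t₀ ω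
        = ∑ i ∈ Icc 1 t, (if i ≤ t₀ then Bc * β ^ (t₀ - i) else 0) * (g i ω) ^ 2 := by
      have h1 : ∑ i ∈ Icc 1 t, (if i ≤ t₀ then Bc * β ^ (t₀ - i) else 0) * (g i ω) ^ 2
          = ∑ i ∈ Icc 1 t, (if i ≤ t₀ then (Bc * β ^ (t₀ - i)) * (g i ω) ^ 2 else 0) :=
        Finset.sum_congr rfl fun i _ => by by_cases h : i ≤ t₀ <;> simp [h]
      rw [h1, ← Finset.sum_filter, hfil, hvhat t₀ ω, Finset.mul_sum, hB_def]
      exact Finset.sum_congr rfl fun i _ => by ring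
    have h2 : ∑ i ∈ Icc 1 t, X i ω
        = ∑ i ∈ Icc 1 t, (c i * (g i ω) ^ 2) - (∑ i ∈ Icc 1 t, c i) * m := by
      rw [Finset.sum_mul, ← Finset.sum_sub_distrib]
      exact Finset.sum_congr rfl fun i _ => by rw [hX_def]; ring
    rw [h2, hcsum, zero_mul, sub_zero, hv1, hv2, ← Finset.sum_sub_distrib]
    exact Finset.sum_congr rfl fun i _ => by rw [hc_def]; ring
  -- bound on the sum of squared coefficients
  have hβ2 : β ^ 2 < 1 := pow_lt_one₀ hβ.le hβ1 (by norm_num)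
  have hβ2' : (0:ℝ) < 1 - β ^ 2 := by linarith
  have hc2 : ∑ i ∈ Icc 1 t, (c i) ^ 2 ≤ 4 * (1 - β) ^ 2 * ((t:ℝ) - t₀) := by
    set D : ℝ := A * β ^ (t - t₀) - Bc with hD_def
    have hD2 : D ^ 2 ≤ Bc ^ 2 := by
      have hp1 : β ^ (t - t₀) ≤ 1 := pow_le_one₀ hβ.le hβ1.le
      have hp0 : (0:ℝ) ≤ β ^ (t - t₀) := by positivity
      have hAB : A * β ^ (t - t₀) ≤ A := mul_le_of_le_one_right hA0 hp1
      have hAB0 : 0 ≤ A * β ^ (t - t₀) := mul_nonneg hA0 hp0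
      exact sq_le_sq' (by nlinarith) (by nlinarith)
    have hsplit : Icc 1 t = Icc 1 t₀ ∪ Ioc t₀ t := by
      ext i
      simp only [Finset.mem_union, Finset.mem_Icc, Finset.mem_Ioc]
      omega
    have hdisj : Disjoint (Icc 1 t₀) (Ioc t₀ t) := by
      rw [Finset.disjoint_left]
      intro i hi hj
      simp only [Finset.mem_Icc] at hi
      simp only [Finset.mem_Ioc] at hj
      omega
    have hsum1 : ∑ i ∈ Icc 1 t₀, (c i) ^ 2 ≤ D ^ 2 * (1/(1 - β ^ 2)) := by
      have heq : ∀ i ∈ Icc 1 t₀, (c i) ^ 2 = D ^ 2 * (β ^ 2) ^ (t₀ - i) := by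
        intro i hi
        simp only [Finset.mem_Icc] at hi
        have hit : i ≤ t₀ := hi.2
        have hexp : t - i = (t - t₀) + (t₀ - i) := by omega
        have hci : c i = β ^ (t₀ - i) * D := by
          rw [hc_def]
          simp only [hit, if_true]
          rw [hexp, pow_add, hD_def]
          ring
        rw [hci, mul_pow, ← pow_mul, mul_comm (t₀ - i) 2, pow_mul]
        ring
      rw [Finset.sum_congr rfl heq, ← Finset.mul_sum]
      refine mul_le_mul_of_nonneg_left ?_ (sq_nonneg D)
      rw [aux_sum_Icc_pow]
      exact aux_geo_le (by positivity) hβ2 t₀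
    have hsum2 : ∑ i ∈ Ioc t₀ t, (c i) ^ 2 ≤ A ^ 2 * (1/(1 - β ^ 2)) := by
      have heq : ∀ i ∈ Ioc t₀ t, (c i) ^ 2 = A ^ 2 * (β ^ 2) ^ (t - i) := by
        intro i hi
        simp only [Finset.mem_Ioc] at hi
        have hit : ¬ (i ≤ t₀) := by omega
        have hci : c i = A * β ^ (t - i) := by
          rw [hc_def]; simp [hit]
        rw [hci, mul_pow, ← pow_mul, mul_comm (t - i) 2, pow_mul]
      rw [Finset.sum_congr rfl heq, ← Finset.mul_sum]
      refine mul_le_mul_of_nonneg_left ?_ (sq_nonneg A)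
      calc ∑ i ∈ Ioc t₀ t, (β ^ 2) ^ (t - i) ≤ ∑ i ∈ Icc 1 t, (β ^ 2) ^ (t - i) := by
            refine Finset.sum_le_sum_of_subset_of_nonneg ?_ (fun i _ _ => by positivity)
            intro i hi
            simp only [Finset.mem_Ioc] at hi
            simp only [Finset.mem_Icc]
            omega
      _ ≤ 1/(1 - β ^ 2) := by rw [aux_sum_Icc_pow]; exact aux_geo_le (by positivity) hβ2 t
    have hB2 : Bc ^ 2 ≤ 2 * (1 - β) ^ 2 := by
      have h := mul_self_le_mul_self hB0 hBle
      have hs : Real.sqrt 2 * Real.sqrt 2 = 2 := Real.mul_self_sqrt (by norm_num)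
      nlinarith
    have hA2 : A ^ 2 ≤ 2 * (1 - β) ^ 2 := by nlinarith
    have hD2' : D ^ 2 ≤ 2 * (1 - β) ^ 2 := hD2.trans hB2
    have hgeo : 1/(1 - β ^ 2) ≤ (t:ℝ) - t₀ := hwin
    have hgeo0 : 0 < 1/(1 - β ^ 2) := by positivity
    calc ∑ i ∈ Icc 1 t, (c i) ^ 2
        = ∑ i ∈ Icc 1 t₀, (c i) ^ 2 + ∑ i ∈ Ioc t₀ t, (c i) ^ 2 := by
          rw [hsplit, Finset.sum_union hdisj]
    _ ≤ D ^ 2 * (1/(1 - β ^ 2)) + A ^ 2 * (1/(1 - β ^ 2)) := add_le_add hsum1 hsum2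
    _ ≤ (2 * (1 - β) ^ 2) * (1/(1 - β ^ 2)) + (2 * (1 - β) ^ 2) * (1/(1 - β ^ 2)) := by
          gcongr
    _ = (4 * (1 - β) ^ 2) * (1/(1 - β ^ 2)) := by ring
    _ ≤ (4 * (1 - β) ^ 2) * ((t:ℝ) - t₀) := by gcongr
    _ = 4 * (1 - β) ^ 2 * ((t:ℝ) - t₀) := by ring
  -- probabilistic part
  have httR : (0:ℝ) < (t:ℝ) - t₀ := by
    have : (t₀:ℝ) < t := by exact_mod_cast ht
    linarith
  have hlog : 0 < Real.log (2/δ) := Real.log_pos (by rw [lt_div_iff₀ hδ0]; linarith)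
  set ε : ℝ := Real.sqrt (8 * G ^ 2 * (1 - β) ^ 2 * ((t:ℝ) - t₀) * Real.log (2/δ)) with hε_def
  have hε : 0 < ε := Real.sqrt_pos.mpr (by positivity)
  have hεsq : ε ^ 2 = 8 * G ^ 2 * (1 - β) ^ 2 * ((t:ℝ) - t₀) * Real.log (2/δ) :=
    Real.sq_sqrt (by positivity)
  set V : ℝ := 4 * G ^ 2 * (1 - β) ^ 2 * ((t:ℝ) - t₀) with hV_def
  have hV : 0 < V := by positivity
  have hVa : ∑ i ∈ Icc 1 t, (|c i| * G) ^ 2 ≤ V := by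
    have h1 : ∀ i, (|c i| * G) ^ 2 = (c i) ^ 2 * G ^ 2 := by
      intro i; rw [mul_pow, sq_abs]
    calc ∑ i ∈ Icc 1 t, (|c i| * G) ^ 2 = ∑ i ∈ Icc 1 t, (c i) ^ 2 * G ^ 2 :=
          Finset.sum_congr rfl fun i _ => h1 i
    _ = (∑ i ∈ Icc 1 t, (c i) ^ 2) * G ^ 2 := by rw [Finset.sum_mul]
    _ ≤ (4 * (1 - β) ^ 2 * ((t:ℝ) - t₀)) * G ^ 2 := by gcongr
    _ = V := by rw [hV_def]; ring
  have hexpδ : Real.exp (-(ε ^ 2) / (2 * V)) = δ/2 := by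
    have h1 : -(ε ^ 2) / (2 * V) = -Real.log (2/δ) := by
      rw [hεsq, hV_def]
      field_simp
      ring
    rw [h1, Real.exp_neg, Real.exp_log (by positivity), inv_div]
  -- upper tail
  have hP1 : (volume {ω | ε ≤ (∑ i ∈ Icc 1 t, X i) ω}).toReal ≤ δ/2 := by
    have := aux_chernoff X hXmeas hXindep (fun i => |c i| * G)
      (fun i => mul_nonneg (abs_nonneg _) hG.le) hXmean hXbdd (Icc 1 t) hε hV hVa
    rwa [hexpδ] at this
  -- lower tail
  have hP2 : (volume {ω | ε ≤ (∑ i ∈ Icc 1 t, (fun i => -X i) i) ω}).toReal ≤ δ/2 := by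
    have hind : iIndepFun (fun i => -X i) volume := by
      have := hindep.comp (fun i (x : ℝ) => -(c i * (x - m)))
        (fun i => ((measurable_id.sub measurable_const).const_mul (c i)).neg)
      exact this
    have := aux_chernoff (fun i => -X i) (fun i => (hXmeas i).neg) hind (fun i => |c i| * G)
      (fun i => mul_nonneg (abs_nonneg _) hG.le)
      (fun i => by
        simp only [Pi.neg_apply]
        rw [integral_neg, hXmean i, neg_zero])
      (fun i => (hXbdd i).mono fun ω h => by simpa [Pi.neg_apply] using h)
      (Icc 1 t) hε hV hVa
    rwa [hexpδ] at this
  -- assemble everything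
  set S : Ω → ℝ := fun ω => ∑ i ∈ Icc 1 t, X i ω with hS_def
  have hSmeas : Measurable S := Finset.measurable_sum _ (fun i _ => hXmeas i)
  have hEeq : {ω : Ω | |vhat t ω - vhat t₀ ω| < ε} = {ω : Ω | |S ω| < ε} := by
    ext ω
    simp only [Set.mem_setOf_eq, hdiff ω, hS_def]
  have hEm : MeasurableSet {ω : Ω | |S ω| < ε} :=
    measurableSet_lt hSmeas.abs measurable_const
  have hsub : {ω : Ω | |S ω| < ε}ᶜ ⊆
      {ω | ε ≤ (∑ i ∈ Icc 1 t, X i) ω} ∪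
      {ω | ε ≤ (∑ i ∈ Icc 1 t, (fun i => -X i) i) ω} := by
    intro ω hω
    simp only [Set.mem_compl_iff, Set.mem_setOf_eq, not_lt] at hω
    rcases le_abs.mp hω with h | h
    · left
      simp only [Set.mem_setOf_eq, Finset.sum_apply]
      exact h
    · right
      simp only [Set.mem_setOf_eq, Finset.sum_apply, Pi.neg_apply]
      rw [Finset.sum_neg_distrib]
      exact h
  have hb1 : volume {ω | ε ≤ (∑ i ∈ Icc 1 t, X i) ω} ≤ ENNReal.ofReal (δ/2) := by
    rw [← ENNReal.ofReal_toReal (measure_ne_top volume _)]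
    exact ENNReal.ofReal_le_ofReal hP1
  have hb2 : volume {ω | ε ≤ (∑ i ∈ Icc 1 t, (fun i => -X i) i) ω} ≤ ENNReal.ofReal (δ/2) := by
    rw [← ENNReal.ofReal_toReal (measure_ne_top volume _)]
    exact ENNReal.ofReal_le_ofReal hP2
  have hcompl : volume {ω : Ω | |S ω| < ε}ᶜ ≤ ENNReal.ofReal δ := by
    calc volume {ω : Ω | |S ω| < ε}ᶜ
        ≤ volume ({ω | ε ≤ (∑ i ∈ Icc 1 t, X i) ω} ∪
            {ω | ε ≤ (∑ i ∈ Icc 1 t, (fun i => -X i) i) ω}) := measure_mono hsub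
    _ ≤ volume {ω | ε ≤ (∑ i ∈ Icc 1 t, X i) ω} +
        volume {ω | ε ≤ (∑ i ∈ Icc 1 t, (fun i => -X i) i) ω} := measure_union_le _ _
    _ ≤ ENNReal.ofReal (δ/2) + ENNReal.ofReal (δ/2) := add_le_add hb1 hb2
    _ = ENNReal.ofReal δ := by
        rw [← ENNReal.ofReal_add (by linarith) (by linarith)]
        norm_num
  rw [ge_iff_le, hEeq]
  have h1 : volume {ω : Ω | |S ω| < ε} = 1 - volume {ω : Ω | |S ω| < ε}ᶜ := by
    conv_lhs => rw [← compl_compl {ω : Ω | |S ω| < ε}]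
    rw [prob_compl_eq_one_sub hEm.compl]
  rw [h1]
  calc ENNReal.ofReal (1 - δ) = 1 - ENNReal.ofReal δ := by
        rw [ENNReal.ofReal_sub 1 hδ0.le, ENNReal.ofReal_one]
  _ ≤ 1 - volume {ω : Ω | |S ω| < ε}ᶜ := tsub_le_tsub_left hcompl 1
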